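/- Let w ∈ W be generic for I_V, and let notMin_w = {u ∈ ℕ^m : u is not the minimizer of x ↦ wᵀx on its fiber F(u)}. Then in_w(I_V) equals the monomial ideal generated by {x^u : u ∈ notMin_w}, and this also equals the ideal generated by the monomials x^u for u ranging over the ≤-minimal elements of notMin_w. -/

import Mathlib

open Matrix MvPolynomial

/-- The toric ideal of `V`: kernel of `xⱼ ↦ t^{vⱼ}` into Laurent polynomials. -/
noncomputable def toricIdeal (K : Type*) [Field K] {n m : ℕ}
    (V : Matrix (Fin n) (Fin m) ℤ) : Ideal (MvPolynomial (Fin m) K) :=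
  RingHom.ker (MvPolynomial.aeval
    (fun j => AddMonoidAlgebra.of' K (Fin n → ℤ) (fun i => V i j)) :
    MvPolynomial (Fin m) K →ₐ[K] AddMonoidAlgebra K (Fin n → ℤ))

/-- The `w`-weight of an exponent vector `a`: `wᵀ a`. -/
noncomputable def wdeg {m : ℕ} (w : Fin m → ℝ) (a : Fin m →₀ ℕ) : ℝ :=
  ∑ i, w i * (a i : ℝ)

/-- The initial form `in_w(f)`: the sum of the terms of `f` of maximal `w`-weight. -/
noncomputable def initialForm {K : Type*} [Field K] {m : ℕ} (w : Fin m → ℝ)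
    (f : MvPolynomial (Fin m) K) : MvPolynomial (Fin m) K :=
  ∑ a ∈ f.support.filter (fun a => ∀ b ∈ f.support, wdeg w b ≤ wdeg w a),
    MvPolynomial.monomial a (f.coeff a)

/-- The initial ideal `in_w(I)`: the ideal generated by the initial forms of elements of `I`. -/
noncomputable def initialIdealW {K : Type*} [Field K] {m : ℕ} (w : Fin m → ℝ)
    (I : Ideal (MvPolynomial (Fin m) K)) : Ideal (MvPolynomial (Fin m) K) :=
  Ideal.span {g | ∃ f ∈ I, g = initialForm w f}

/-- A monomial ideal: an ideal generated by monomials. -/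
def IsMonomialIdeal {K : Type*} [Field K] {m : ℕ}
    (J : Ideal (MvPolynomial (Fin m) K)) : Prop :=
  ∃ S : Set (Fin m →₀ ℕ),
    J = Ideal.span ((fun a => MvPolynomial.monomial a (1 : K)) '' S)

/-- The cone `U = ker_ℝ(V) ∩ ℝᵐ_{≥0}`. -/
def coneU {n m : ℕ} (V : Matrix (Fin n) (Fin m) ℤ) : Set (Fin m → ℝ) :=
  {u | (V.map (Int.cast : ℤ → ℝ)) *ᵥ u = 0 ∧ ∀ i, 0 ≤ u i}

/-- The Gröbner region `W`: weight vectors whose linear functional is bounded below on `U`. -/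
def coneW {n m : ℕ} (V : Matrix (Fin n) (Fin m) ℤ) : Set (Fin m → ℝ) :=
  {w | ∃ c : ℝ, ∀ u ∈ coneU V, c ≤ w ⬝ᵥ u}

/-- `Min_w` (on exponent vectors): the set of `u ∈ ℕᵐ` that are minima of their own
fiber `F(u)` with respect to the preorder `≼_w` induced by the weight vector `w`. -/
def MinSetF {n m : ℕ} (V : Matrix (Fin n) (Fin m) ℤ) (w : Fin m → ℝ) :
    Set (Fin m →₀ ℕ) :=
  {u | ∀ x : Fin m →₀ ℕ, V *ᵥ (fun j => (x j : ℤ)) = V *ᵥ (fun j => (u j : ℤ)) →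
    wdeg w u ≤ wdeg w x}

namespace S15
variable {K : Type*} [Field K] {m : ℕ}

lemma wdeg_add (w : Fin m → ℝ) (a b : Fin m →₀ ℕ) :
    wdeg w (a + b) = wdeg w a + wdeg w b := by
  simp [wdeg, mul_add, Finset.sum_add_distrib]

lemma coeff_initialForm (w : Fin m → ℝ) (f : MvPolynomial (Fin m) K) (b : Fin m →₀ ℕ) :
    (initialForm w f).coeff b =
      if b ∈ f.support ∧ ∀ c ∈ f.support, wdeg w c ≤ wdeg w b then f.coeff b else 0 := by
  classical
  rw [initialForm, MvPolynomial.coeff_sum]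
  simp_rw [MvPolynomial.coeff_monomial]
  rw [Finset.sum_ite_eq' _ b (fun a => f.coeff a)]
  simp only [Finset.mem_filter]

noncomputable def hpart (w : Fin m → ℝ) (d : ℝ) (f : MvPolynomial (Fin m) K) :
    MvPolynomial (Fin m) K :=
  ∑ a ∈ f.support.filter (fun a => wdeg w a = d), MvPolynomial.monomial a (f.coeff a)

lemma coeff_hpart (w : Fin m → ℝ) (d : ℝ) (f : MvPolynomial (Fin m) K) (b : Fin m →₀ ℕ) :
    (hpart w d f).coeff b = if wdeg w b = d then f.coeff b else 0 := by
  classical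
  rw [hpart, MvPolynomial.coeff_sum]
  simp_rw [MvPolynomial.coeff_monomial]
  rw [Finset.sum_ite_eq' _ b (fun a => f.coeff a)]
  simp only [Finset.mem_filter]
  by_cases h1 : wdeg w b = d <;> by_cases h2 : b ∈ f.support <;>
    simp [h1, h2, MvPolynomial.notMem_support_iff.mp] <;>
    simp_all [MvPolynomial.notMem_support_iff]

lemma hpart_sum {ι : Type*} (w : Fin m → ℝ) (d : ℝ) (s : Finset ι) (c : ι → K)
    (f : ι → MvPolynomial (Fin m) K) :
    hpart w d (∑ i ∈ s, c i • f i) = ∑ i ∈ s, c i • hpart w d (f i) := by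
  apply MvPolynomial.ext; intro b
  simp only [coeff_hpart, MvPolynomial.coeff_sum, MvPolynomial.coeff_smul,
    smul_eq_mul, mul_ite, mul_zero]
  split
  · rfl
  · simp

lemma hpart_homog_eq (w : Fin m → ℝ) {d r : ℝ} {g : MvPolynomial (Fin m) K}
    (h : ∀ b ∈ g.support, wdeg w b = d) :
    hpart w r g = if r = d then g else 0 := by
  by_cases hr : r = d
  · subst hr
    rw [if_pos rfl]
    apply MvPolynomial.ext; intro b
    rw [coeff_hpart]
    by_cases hb : b ∈ g.support
    · rw [if_pos (h b hb)]
    · simp [MvPolynomial.notMem_support_iff.mp hb]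
  · rw [if_neg hr]
    apply MvPolynomial.ext; intro b
    rw [coeff_hpart]
    by_cases hb : b ∈ g.support
    · rw [h b hb, if_neg (Ne.symm hr)]; simp
    · simp [MvPolynomial.notMem_support_iff.mp hb]

open scoped Classical in
noncomputable def topdeg (w : Fin m → ℝ) (f : MvPolynomial (Fin m) K) : ℝ :=
  if h : f = 0 then 0
  else (f.support.image (wdeg w)).max'
    (Finset.Nonempty.image (MvPolynomial.support_nonempty.mpr h) _)

lemma le_topdeg (w : Fin m → ℝ) {f : MvPolynomial (Fin m) K} {b : Fin m →₀ ℕ}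
    (hb : b ∈ f.support) : wdeg w b ≤ topdeg w f := by
  have hf : f ≠ 0 := fun h => by simp [h] at hb
  classical
  rw [topdeg]
  rw [dif_neg hf]
  exact Finset.le_max' _ _ (Finset.mem_image_of_mem _ hb)

lemma exists_topdeg (w : Fin m → ℝ) {f : MvPolynomial (Fin m) K} (hf : f ≠ 0) :
    ∃ a ∈ f.support, wdeg w a = topdeg w f := by
  classical
  rw [topdeg]
  rw [dif_neg hf]
  have := (f.support.image (wdeg w)).max'_mem
    (Finset.Nonempty.image (MvPolynomial.support_nonempty.mpr hf) _)
  simpa using this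

lemma mem_support_initialForm (w : Fin m → ℝ) {f : MvPolynomial (Fin m) K}
    (b : Fin m →₀ ℕ) :
    b ∈ (initialForm w f).support ↔ b ∈ f.support ∧ wdeg w b = topdeg w f := by
  rw [MvPolynomial.mem_support_iff, coeff_initialForm]
  by_cases hc : b ∈ f.support ∧ ∀ c ∈ f.support, wdeg w c ≤ wdeg w b
  · rw [if_pos hc]
    constructor
    · intro _
      refine ⟨hc.1, le_antisymm (le_topdeg w hc.1) ?_⟩
      have hf : f ≠ 0 := fun h0 => by simp [h0] at hc
      obtain ⟨a, ha, hda⟩ := exists_topdeg w hf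
      rw [← hda]; exact hc.2 a ha
    · intro _; exact MvPolynomial.mem_support_iff.mp hc.1
  · rw [if_neg hc]
    constructor
    · intro h; exact absurd rfl h
    · rintro ⟨hb, hd⟩
      exact absurd ⟨hb, fun c hcs => hd ▸ le_topdeg w hcs⟩ hc

lemma initialForm_eq_hpart (w : Fin m → ℝ) {f : MvPolynomial (Fin m) K} (hf : f ≠ 0) :
    initialForm w f = hpart w (topdeg w f) f := by
  apply MvPolynomial.ext; intro b
  rw [coeff_initialForm, coeff_hpart]
  by_cases hb : b ∈ f.support
  · by_cases hd : wdeg w b = topdeg w f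
    · rw [if_pos hd, if_pos ⟨hb, fun c hcs => hd ▸ le_topdeg w hcs⟩]
    · rw [if_neg hd, if_neg]
      intro hc
      obtain ⟨a, ha, hda⟩ := exists_topdeg w hf
      exact hd (le_antisymm (le_topdeg w hb) (hda ▸ hc.2 a ha))
  · have h0 : f.coeff b = 0 := MvPolynomial.notMem_support_iff.mp hb
    simp [h0, hb]

lemma initialForm_zero (w : Fin m → ℝ) : initialForm w (0 : MvPolynomial (Fin m) K) = 0 := by
  simp [initialForm]

lemma initialForm_homog (w : Fin m → ℝ) {f : MvPolynomial (Fin m) K} :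
    ∀ b ∈ (initialForm w f).support, wdeg w b = topdeg w f :=
  fun b hb => ((mem_support_initialForm w b).mp hb).2

lemma hpart_initialForm (w : Fin m → ℝ) {f : MvPolynomial (Fin m) K} (d : ℝ) :
    hpart w d (initialForm w f) = if d = topdeg w f then initialForm w f else 0 :=
  hpart_homog_eq w (initialForm_homog w)

lemma initialForm_ne_zero (w : Fin m → ℝ) {f : MvPolynomial (Fin m) K} (hf : f ≠ 0) :
    initialForm w f ≠ 0 := by
  obtain ⟨a, ha, hda⟩ := exists_topdeg w hf
  intro h
  have : a ∈ (initialForm w f).support := (mem_support_initialForm w a).mpr ⟨ha, hda⟩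
  rw [h] at this; simp at this

lemma mem_support_monomial_mul {b : Fin m →₀ ℕ} {c : K} (hc : c ≠ 0)
    (f : MvPolynomial (Fin m) K) (e : Fin m →₀ ℕ) :
    e ∈ (MvPolynomial.monomial b c * f).support ↔ b ≤ e ∧ e - b ∈ f.support := by
  rw [MvPolynomial.mem_support_iff, MvPolynomial.coeff_monomial_mul']
  by_cases h : b ≤ e
  · simp [h, hc, MvPolynomial.mem_support_iff]
  · simp [h]

lemma wdeg_sub_add {b e : Fin m →₀ ℕ} (h : b ≤ e) :
    wdeg w (e - b) + wdeg w b = wdeg w e := by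
  rw [← wdeg_add]
  congr 1
  exact tsub_add_cancel_of_le h

lemma initialForm_monomial_mul (w : Fin m → ℝ) (b : Fin m →₀ ℕ) {c : K} (hc : c ≠ 0)
    (f : MvPolynomial (Fin m) K) :
    initialForm w (MvPolynomial.monomial b c * f) =
      MvPolynomial.monomial b c * initialForm w f := by
  apply MvPolynomial.ext; intro e
  rw [coeff_initialForm, MvPolynomial.coeff_monomial_mul', MvPolynomial.coeff_monomial_mul']
  by_cases hbe : b ≤ e
  · rw [if_pos hbe, coeff_initialForm]
    have hkey : (e ∈ (MvPolynomial.monomial b c * f).support ∧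
        ∀ x ∈ (MvPolynomial.monomial b c * f).support, wdeg w x ≤ wdeg w e) ↔
        (e - b ∈ f.support ∧ ∀ x ∈ f.support, wdeg w x ≤ wdeg w (e - b)) := by
      constructor
      · rintro ⟨he, hmax⟩
        refine ⟨((mem_support_monomial_mul hc f e).mp he).2, fun x hx => ?_⟩
        have hbx : b + x ∈ (MvPolynomial.monomial b c * f).support := by
          rw [mem_support_monomial_mul hc]
          exact ⟨le_add_right le_rfl, by simpa [add_tsub_cancel_left] using hx⟩
        have := hmax _ hbx
        rw [wdeg_add] at this
        have he' := wdeg_sub_add (w := w) hbe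
        linarith
      · rintro ⟨he, hmax⟩
        refine ⟨(mem_support_monomial_mul hc f e).mpr ⟨hbe, he⟩, fun x hx => ?_⟩
        obtain ⟨hbx, hx'⟩ := (mem_support_monomial_mul hc f x).mp hx
        have h1 := hmax _ hx'
        have h2 := wdeg_sub_add (w := w) hbx
        have h3 := wdeg_sub_add (w := w) hbe
        linarith
    by_cases h2 : e - b ∈ f.support ∧ ∀ x ∈ f.support, wdeg w x ≤ wdeg w (e - b)
    · rw [if_pos (hkey.mpr h2), if_pos h2, if_pos hbe]
    · rw [if_neg (fun hx => h2 (hkey.mp hx)), if_neg h2, mul_zero]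
      simp
  · rw [if_neg hbe]
    rw [if_neg hbe]
    rw [if_neg]
    rintro ⟨he, -⟩
    exact hbe ((mem_support_monomial_mul hc f e).mp he).1

variable (w : Fin m → ℝ) in
lemma mul_mem_spanIF {I : Ideal (MvPolynomial (Fin m) K)} (p x : MvPolynomial (Fin m) K)
    (hx : x ∈ Submodule.span K {g | ∃ f ∈ I, g = initialForm w f}) :
    p * x ∈ Submodule.span K {g | ∃ f ∈ I, g = initialForm w f} := by
  induction hx using Submodule.span_induction with
  | mem g hg =>
    obtain ⟨f, hfI, rfl⟩ := hg
    rw [MvPolynomial.as_sum p, Finset.sum_mul]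
    apply Submodule.sum_mem
    intro v hv
    apply Submodule.subset_span
    refine ⟨MvPolynomial.monomial v (p.coeff v) * f, Ideal.mul_mem_left _ _ hfI, ?_⟩
    rw [initialForm_monomial_mul w v (MvPolynomial.mem_support_iff.mp hv)]
  | zero => simp
  | add x y _ _ hx hy => rw [mul_add]; exact Submodule.add_mem _ hx hy
  | smul c x _ hx => rw [mul_smul_comm]; exact Submodule.smul_mem _ _ hx

variable (w : Fin m → ℝ) in
lemma initialIdealW_le_spanIF {I : Ideal (MvPolynomial (Fin m) K)}
    {x : MvPolynomial (Fin m) K} (hx : x ∈ initialIdealW w I) :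
    x ∈ Submodule.span K {g | ∃ f ∈ I, g = initialForm w f} := by
  induction hx using Submodule.span_induction with
  | mem g hg => exact Submodule.subset_span hg
  | zero => simp
  | add x y _ _ hx hy => exact Submodule.add_mem _ hx hy
  | smul r x _ hx => rw [smul_eq_mul]; exact mul_mem_spanIF w r x hx

lemma exists_initialForm_eq_monomial (w : Fin m → ℝ) {I : Ideal (MvPolynomial (Fin m) K)}
    {a : Fin m →₀ ℕ} (ha : MvPolynomial.monomial a (1 : K) ∈ initialIdealW w I) :
    ∃ f ∈ I, initialForm w f = MvPolynomial.monomial a (1 : K) := by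
  classical
  have hN := initialIdealW_le_spanIF w ha
  rw [Submodule.mem_span_set'] at hN
  obtain ⟨N, c, g, hsum⟩ := hN
  choose F hFI hFg using fun i => (g i).2
  set d := wdeg w a with hd
  set T' : Finset (Fin N) :=
    Finset.univ.filter (fun i => F i ≠ 0 ∧ topdeg w (F i) = d) with hT'
  set f : MvPolynomial (Fin m) K := ∑ i ∈ T', c i • F i with hf
  have hfI : f ∈ I := Submodule.sum_mem _ fun i _ => Submodule.smul_of_tower_mem _ _ (hFI i)
  -- hpart d f = monomial a 1
  have hmono_homog : ∀ b ∈ (MvPolynomial.monomial a (1 : K)).support, wdeg w b = d := by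
    intro b hb
    rw [MvPolynomial.support_monomial, if_neg (one_ne_zero)] at hb
    rw [Finset.mem_singleton] at hb
    rw [hb]
  have hp : hpart w d f = MvPolynomial.monomial a (1 : K) := by
    have h1 : hpart w d (MvPolynomial.monomial a (1 : K)) = MvPolynomial.monomial a (1 : K) := by
      rw [hpart_homog_eq w hmono_homog, if_pos rfl]
    have h2 : hpart w d (∑ i : Fin N, c i • (g i : MvPolynomial (Fin m) K)) =
        ∑ i : Fin N, c i • hpart w d (g i : MvPolynomial (Fin m) K) :=
      hpart_sum w d _ _ _
    have h3 : ∀ i : Fin N, hpart w d (g i : MvPolynomial (Fin m) K) =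
        if i ∈ T' then initialForm w (F i) else 0 := by
      intro i
      by_cases hFi : F i = 0
      · rw [hFg i, hFi, initialForm_zero]
        have : hpart w d (0 : MvPolynomial (Fin m) K) = 0 := by
          apply MvPolynomial.ext; intro b; rw [coeff_hpart]; simp
        rw [this]
        rw [if_neg (by simp [hT', hFi])]
      · rw [hFg i, hpart_initialForm w d]
        by_cases htop : topdeg w (F i) = d
        · rw [if_pos htop.symm, if_pos (by simp [hT', hFi, htop])]
        · rw [if_neg (fun h => htop h.symm), if_neg (by simp [hT', htop])]
    calc hpart w d f = ∑ i ∈ T', c i • hpart w d (F i) := hpart_sum w d _ _ _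
      _ = ∑ i ∈ T', c i • initialForm w (F i) := by
          apply Finset.sum_congr rfl
          intro i hi
          rw [hT', Finset.mem_filter] at hi
          rw [initialForm_eq_hpart w hi.2.1, hi.2.2]
      _ = ∑ i ∈ T', c i • hpart w d (g i : MvPolynomial (Fin m) K) := by
          apply Finset.sum_congr rfl
          intro i hi
          rw [h3 i, if_pos hi]
      _ = ∑ i : Fin N, c i • hpart w d (g i : MvPolynomial (Fin m) K) := by
          apply Finset.sum_subset (Finset.subset_univ _)
          intro i _ hi
          rw [h3 i, if_neg hi, smul_zero]
      _ = hpart w d (∑ i : Fin N, c i • (g i : MvPolynomial (Fin m) K)) := h2.symm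
      _ = MvPolynomial.monomial a (1 : K) := by rw [hsum, h1]
  -- support bound
  have hsup : ∀ b ∈ f.support, wdeg w b ≤ d := by
    intro b hb
    have := MvPolynomial.support_sum hb
    rw [Finset.mem_biUnion] at this
    obtain ⟨i, hi, hbi⟩ := this
    have hbi' : b ∈ (F i).support := MvPolynomial.support_smul hbi
    rw [hT', Finset.mem_filter] at hi
    calc wdeg w b ≤ topdeg w (F i) := le_topdeg w hbi'
      _ = d := hi.2.2
  -- coeff a f = 1, and a has degree d
  have hcoeffa : f.coeff a = 1 := by
    have := coeff_hpart w d f a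
    rw [hp, if_pos hd.symm, MvPolynomial.coeff_monomial, if_pos rfl] at this
    exact this.symm
  have hane : f ≠ 0 := by
    intro h0
    rw [h0] at hcoeffa
    simp at hcoeffa
  have hamem : a ∈ f.support := MvPolynomial.mem_support_iff.mpr (by rw [hcoeffa]; exact one_ne_zero)
  have htopf : topdeg w f = d := by
    apply le_antisymm
    · obtain ⟨b, hb, hbd⟩ := exists_topdeg w hane
      rw [← hbd]; exact hsup b hb
    · rw [hd]
      exact le_topdeg w hamem
  refine ⟨f, hfI, ?_⟩
  rw [initialForm_eq_hpart w hane, htopf, hp]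

variable {n : ℕ} (V : Matrix (Fin n) (Fin m) ℤ)

/-- the image of the group element associated to `b`. -/
def nu (b : Fin m →₀ ℕ) : Fin n → ℤ := V *ᵥ (fun j => (b j : ℤ))

lemma aeval_toric_monomial (b : Fin m →₀ ℕ) (r : K) :
    (MvPolynomial.aeval
      (fun j => AddMonoidAlgebra.of' K (Fin n → ℤ) (fun i => V i j)))
      (MvPolynomial.monomial b r) = AddMonoidAlgebra.single (nu V b) r := by
  classical
  rw [MvPolynomial.aeval_monomial]
  have hprod : (b.prod fun j k =>
      AddMonoidAlgebra.of' K (Fin n → ℤ) (fun i => V i j) ^ k) =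
      AddMonoidAlgebra.single (∑ j ∈ b.support, (b j : ℕ) • (fun i => V i j : Fin n → ℤ)) 1 := by
    unfold Finsupp.prod
    have hall : ∀ j ∈ b.support,
        (AddMonoidAlgebra.of' K (Fin n → ℤ) fun i => V i j) ^ b j =
        AddMonoidAlgebra.single ((b j : ℕ) • (fun i => V i j : Fin n → ℤ)) (1 : K) := by
      intro j _
      rw [AddMonoidAlgebra.of', AddMonoidAlgebra.single_pow, one_pow]
    rw [Finset.prod_congr rfl hall, AddMonoidAlgebra.prod_single, Finset.prod_const_one]
  rw [hprod]
  have hsum : (∑ j ∈ b.support, (b j : ℕ) • (fun i => V i j : Fin n → ℤ)) = nu V b := by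
    funext i
    rw [Finset.sum_apply]
    have : ∀ j ∈ b.support, ((b j : ℕ) • (fun i => V i j : Fin n → ℤ)) i
        = (b j : ℤ) * V i j := by
      intro j _
      simp [nsmul_eq_mul]
    rw [Finset.sum_congr rfl this]
    rw [show nu V b i = ∑ j, V i j * (b j : ℤ) from rfl]
    rw [← Finset.sum_subset (Finset.subset_univ b.support) (by
      intro j _ hj
      rw [Finsupp.notMem_support_iff.mp hj]
      simp)]
    apply Finset.sum_congr rfl
    intro j _
    ring
  rw [hsum]
  have halg : (algebraMap K (AddMonoidAlgebra K (Fin n → ℤ))) r =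
      AddMonoidAlgebra.single 0 r := rfl
  rw [halg, AddMonoidAlgebra.single_mul_single, zero_add, mul_one]

lemma aeval_toric_eq_sum (f : MvPolynomial (Fin m) K) :
    (MvPolynomial.aeval
      (fun j => AddMonoidAlgebra.of' K (Fin n → ℤ) (fun i => V i j))) f =
      ∑ b ∈ f.support, AddMonoidAlgebra.single (nu V b) (f.coeff b) := by
  conv_lhs => rw [MvPolynomial.as_sum f]
  rw [map_sum]
  exact Finset.sum_congr rfl fun b _ => aeval_toric_monomial V b _

lemma notMin_of_initialForm_monomial {f : MvPolynomial (Fin m) K} {a : Fin m →₀ ℕ}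
    (w : Fin m → ℝ)
    (hfI : f ∈ toricIdeal K V)
    (hin : initialForm w f = MvPolynomial.monomial a (1 : K)) :
    ∃ x : Fin m →₀ ℕ, nu V x = nu V a ∧ wdeg w x < wdeg w a := by
  classical
  have hane : f ≠ 0 := by
    intro h0
    rw [h0, initialForm_zero] at hin
    exact one_ne_zero (MvPolynomial.monomial_eq_zero.mp hin.symm)
  have hsuppin : (initialForm w f).support = {a} := by
    rw [hin, MvPolynomial.support_monomial, if_neg one_ne_zero]
  have hamax : a ∈ f.support ∧ wdeg w a = topdeg w f := by
    have : a ∈ (initialForm w f).support := by rw [hsuppin]; exact Finset.mem_singleton_self a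
    exact (mem_support_initialForm w a).mp this
  have huniq : ∀ b ∈ f.support, wdeg w b = topdeg w f → b = a := by
    intro b hb hbd
    have : b ∈ (initialForm w f).support := (mem_support_initialForm w b).mpr ⟨hb, hbd⟩
    rw [hsuppin, Finset.mem_singleton] at this
    exact this
  have hcoeffa : f.coeff a = 1 := by
    have h := coeff_initialForm w f a
    rw [hin, MvPolynomial.coeff_monomial, if_pos rfl,
      if_pos ⟨hamax.1, fun c hcs => hamax.2 ▸ le_topdeg w hcs⟩] at h
    exact h.symm
  have hker : (∑ b ∈ f.support, AddMonoidAlgebra.single (nu V b) (f.coeff b)) = 0 := by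
    rw [← aeval_toric_eq_sum]
    exact hfI
  by_contra hno
  push_neg at hno
  -- evaluate at nu V a
  have heval : (∑ b ∈ f.support,
      (AddMonoidAlgebra.single (nu V b) (f.coeff b) : AddMonoidAlgebra K (Fin n → ℤ))).coeff (nu V a) = 0 := by
    rw [hker]; rfl
  rw [AddMonoidAlgebra.coeff_sum, Finsupp.finset_sum_apply] at heval
  have hterm : ∀ b ∈ f.support,
      (AddMonoidAlgebra.single (nu V b) (f.coeff b) : AddMonoidAlgebra K (Fin n → ℤ)).coeff (nu V a)
        = if b = a then 1 else 0 := by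
    intro b hb
    rw [AddMonoidAlgebra.coeff_single, Finsupp.single_apply]
    by_cases hba : b = a
    · subst hba
      rw [if_pos rfl, if_pos rfl, hcoeffa]
    · rw [if_neg hba, if_neg]
      intro hnu
      have hlt : wdeg w b ≤ topdeg w f := le_topdeg w hb
      rcases lt_or_eq_of_le hlt with h | h
      · exact absurd (hno b hnu) (not_le.mpr (hamax.2 ▸ h))
      · exact hba (huniq b hb h)
  rw [Finset.sum_congr rfl hterm] at heval
  rw [Finset.sum_ite_eq' f.support a (fun _ => (1 : K)), if_pos hamax.1] at heval
  simp at heval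

lemma monomial_notMin_mem (w : Fin m → ℝ) {a x : Fin m →₀ ℕ}
    (hVx : nu V x = nu V a) (hlt : wdeg w x < wdeg w a) :
    MvPolynomial.monomial a (1 : K) ∈ initialIdealW w (toricIdeal K V) := by
  classical
  have hax : a ≠ x := fun h => absurd (h ▸ hlt) (lt_irrefl _)
  set f : MvPolynomial (Fin m) K :=
    MvPolynomial.monomial a 1 - MvPolynomial.monomial x 1 with hf
  have hfI : f ∈ toricIdeal K V := by
    rw [toricIdeal, RingHom.mem_ker, hf, map_sub, aeval_toric_monomial,
      aeval_toric_monomial, hVx, sub_self]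
  have hcoeff : ∀ b, f.coeff b = (if a = b then (1:K) else 0) - (if x = b then 1 else 0) := by
    intro b
    rw [hf, MvPolynomial.coeff_sub, MvPolynomial.coeff_monomial, MvPolynomial.coeff_monomial]
  have hsupp : f.support = {a, x} := by
    ext b
    rw [MvPolynomial.mem_support_iff, hcoeff b]
    by_cases h1 : b = a <;> by_cases h2 : b = x <;>
      simp [h1, h2, hax, Ne.symm hax] <;>
      simp_all [Ne.symm (h1 : b ≠ a), Ne.symm (h2 : b ≠ x)]
  have hin : initialForm w f = MvPolynomial.monomial a (1 : K) := by
    rw [initialForm, hsupp]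
    have hfilter : ({a, x} : Finset (Fin m →₀ ℕ)).filter
        (fun c => ∀ b ∈ ({a, x} : Finset (Fin m →₀ ℕ)), wdeg w b ≤ wdeg w c) = {a} := by
      ext b
      rw [Finset.mem_filter]
      constructor
      · rintro ⟨hb, hmax⟩
        rw [Finset.mem_insert, Finset.mem_singleton] at hb
        rcases hb with h | h
        · rw [h]; exact Finset.mem_singleton_self a
        · exfalso
          have := hmax a (by simp)
          rw [h] at *
          exact absurd (lt_of_lt_of_le hlt this) (lt_irrefl _)
      · intro hb
        rw [Finset.mem_singleton] at hb
        subst hb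
        refine ⟨by simp, fun c hc => ?_⟩
        rw [Finset.mem_insert, Finset.mem_singleton] at hc
        rcases hc with h | h
        · rw [h]
        · rw [h]; exact le_of_lt hlt
    rw [hfilter, Finset.sum_singleton, hcoeff a, if_pos rfl, if_neg (Ne.symm hax), sub_zero]
  exact Ideal.subset_span ⟨f, hfI, hin.symm⟩

end S15

/-- Let `w ∈ W` be generic for `I_V` and let
`notMin_w = ℕᵐ \ Min_w`. Then `in_w(I_V)` is the monomial ideal generated by the
monomials `x^u` with `u ∈ notMin_w`, which also equals the ideal generated by the
monomials `x^u` for `u` ranging over the `≤`-minimal elements of `notMin_w`. -/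
theorem initialIdeal_eq_span_notMin
    (K : Type*) [Field K] [CharZero K]
    (n m : ℕ) (hnm : n < m) (V : Matrix (Fin n) (Fin m) ℤ)
    (hrank : V.rank = n)
    (hcomplete : ∀ b : Fin n → ℝ, ∃ u : Fin m → ℝ,
      (∀ i, 0 ≤ u i) ∧ (V.map (Int.cast : ℤ → ℝ)) *ᵥ u = b)
    (w : Fin m → ℝ) (hw : w ∈ coneW V)
    (hgeneric : IsMonomialIdeal (initialIdealW w (toricIdeal K V))) :
    initialIdealW w (toricIdeal K V) =
      Ideal.span ((fun a => MvPolynomial.monomial a (1 : K)) ''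
        {u : Fin m →₀ ℕ | u ∉ MinSetF V w}) ∧
    initialIdealW w (toricIdeal K V) =
      Ideal.span ((fun a => MvPolynomial.monomial a (1 : K)) ''
        {u : Fin m →₀ ℕ | u ∉ MinSetF V w ∧
          ∀ u' : Fin m →₀ ℕ, u' ∉ MinSetF V w → u' ≤ u → u' = u}) := by
  classical
  have hfirst : initialIdealW w (toricIdeal K V) =
      Ideal.span ((fun a => MvPolynomial.monomial a (1 : K)) ''
        {u : Fin m →₀ ℕ | u ∉ MinSetF V w}) := by
    apply le_antisymm
    · obtain ⟨S, hS⟩ := hgeneric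
      rw [hS]
      apply Ideal.span_le.mpr
      rintro _ ⟨u, hu, rfl⟩
      have hmem : MvPolynomial.monomial u (1 : K) ∈ initialIdealW w (toricIdeal K V) := by
        rw [hS]; exact Ideal.subset_span ⟨u, hu, rfl⟩
      obtain ⟨f, hfI, hf⟩ := S15.exists_initialForm_eq_monomial w hmem
      have hnot : u ∉ MinSetF V w := by
        obtain ⟨x, hx, hlt⟩ := S15.notMin_of_initialForm_monomial V w hfI hf
        intro hmin
        exact absurd (hmin x hx) (not_le.mpr hlt)
      exact Ideal.subset_span ⟨u, hnot, rfl⟩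
    · apply Ideal.span_le.mpr
      rintro _ ⟨u, hu, rfl⟩
      simp only [Set.mem_setOf_eq, MinSetF] at hu
      push_neg at hu
      obtain ⟨x, hx, hlt⟩ := hu
      exact S15.monomial_notMin_mem V w hx hlt
  refine ⟨hfirst, ?_⟩
  rw [hfirst]
  apply le_antisymm
  · apply Ideal.span_le.mpr
    rintro _ ⟨u, hu, rfl⟩
    rw [Set.mem_setOf_eq] at hu
    revert hu
    induction u using WellFoundedLT.induction with
    | ind u IH =>
      intro hu
      by_cases hmin : ∀ u' : Fin m →₀ ℕ, u' ∉ MinSetF V w → u' ≤ u → u' = u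
      · exact Ideal.subset_span ⟨u, ⟨hu, hmin⟩, rfl⟩
      · push_neg at hmin
        obtain ⟨u', hu', hle, hne⟩ := hmin
        have hlt : u' < u := lt_of_le_of_ne hle hne
        have h1 := IH u' hlt hu'
        have heq : MvPolynomial.monomial u (1 : K) =
            MvPolynomial.monomial (u - u') (1 : K) * MvPolynomial.monomial u' 1 := by
          rw [MvPolynomial.monomial_mul, one_mul, tsub_add_cancel_of_le hle]
        show MvPolynomial.monomial u (1 : K) ∈ _
        rw [heq]
        exact Ideal.mul_mem_left _ _ h1
  · apply Ideal.span_le.mpr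
    rintro _ ⟨u, hu, rfl⟩
    exact Ideal.subset_span ⟨u, hu.1, rfl⟩
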